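/- Let P ⊆ ℚ^d be a plane (2-dimensional subspace) and Z an orthant in ℚ^d. Then there exists a set V ⊆ ℚ^d with |V| ≤ 2 such that P ∩ Z equals the cone generated by V (the set of nonnegative rational linear combinations of elements of V). -/

import Mathlib

/-- The cone generated by a set `V ⊆ ℚ^d`: all finite nonnegative rational
linear combinations of elements of `V`. -/
def cone {d : ℕ} (V : Set (Fin d → ℚ)) : Set (Fin d → ℚ) :=
  {x | ∃ (k : ℕ) (lam : Fin k → ℚ) (c : Fin k → (Fin d → ℚ)),
    (∀ i, 0 ≤ lam i) ∧ (∀ i, c i ∈ V) ∧ x = ∑ i, lam i • c i}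

local notation "Q0" => {c : ℚ // 0 ≤ c}

lemma cone_eq_span {d : ℕ} (V : Set (Fin d → ℚ)) :
    cone V = ↑(Submodule.span Q0 V) := by
  ext x
  rw [SetLike.mem_coe, Submodule.mem_span_set']
  constructor
  · rintro ⟨k, lam, c, h0, hV, rfl⟩
    exact ⟨k, fun i => ⟨lam i, h0 i⟩, fun i => ⟨c i, hV i⟩, rfl⟩
  · rintro ⟨n, f, g, rfl⟩
    exact ⟨n, fun i => (f i : ℚ), fun i => (g i : _), fun i => (f i).2, fun i => (g i).2, rfl⟩

/-- 2×2 determinant. -/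
def det2 (u v : Fin 2 → ℚ) : ℚ := u 0 * v 1 - u 1 * v 0

lemma det2_smul_left (a : ℚ) (u v : Fin 2 → ℚ) : det2 (a • u) v = a * det2 u v := by
  simp [det2]; ring

lemma det2_smul_right (a : ℚ) (u v : Fin 2 → ℚ) : det2 u (a • v) = a * det2 u v := by
  simp [det2]; ring

lemma det2_neg_left (u v : Fin 2 → ℚ) : det2 (-u) v = - det2 u v := by
  simp [det2]; ring

lemma det2_neg_right (u v : Fin 2 → ℚ) : det2 u (-v) = - det2 u v := by
  simp [det2]; ring

lemma det2_swap (u v : Fin 2 → ℚ) : det2 v u = - det2 u v := by simp [det2]; ring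

/-- membership with explicit rational coefficients -/
lemma mem_span_pair' {u w x : Fin 2 → ℚ} :
    x ∈ Submodule.span Q0 ({u, w} : Set (Fin 2 → ℚ)) ↔
      ∃ a b : ℚ, 0 ≤ a ∧ 0 ≤ b ∧ x = a • u + b • w := by
  rw [Submodule.mem_span_pair]
  constructor
  · rintro ⟨m, n, rfl⟩
    exact ⟨m, n, m.2, n.2, rfl⟩
  · rintro ⟨a, b, ha, hb, rfl⟩
    exact ⟨⟨a, ha⟩, ⟨b, hb⟩, rfl⟩

lemma smul_mem_span {T : Set (Fin 2 → ℚ)} {v : Fin 2 → ℚ} {a : ℚ} (ha : 0 ≤ a)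
    (hv : v ∈ Submodule.span Q0 T) : a • v ∈ Submodule.span Q0 T := by
  have := Submodule.smul_mem _ (⟨a, ha⟩ : Q0) hv
  simpa using this

lemma pair_mem_span {u w : Fin 2 → ℚ} (hd : 0 < det2 u w) (x : Fin 2 → ℚ) :
    x ∈ Submodule.span Q0 ({u, w} : Set (Fin 2 → ℚ)) ↔ 0 ≤ det2 u x ∧ 0 ≤ det2 x w := by
  rw [mem_span_pair']
  constructor
  · rintro ⟨a, b, ha, hb, rfl⟩
    constructor
    · have : det2 u (a • u + b • w) = b * det2 u w := by simp [det2]; ring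
      rw [this]; positivity
    · have : det2 (a • u + b • w) w = a * det2 u w := by simp [det2]; ring
      rw [this]; positivity
  · rintro ⟨h1, h2⟩
    refine ⟨det2 x w / det2 u w, det2 u x / det2 u w, by positivity, by positivity, ?_⟩
    have hD : det2 u w ≠ 0 := ne_of_gt hd
    funext i
    fin_cases i <;>
    · simp only [det2, Pi.add_apply, Pi.smul_apply, smul_eq_mul, Fin.zero_eta, Fin.mk_one] at *
      rw [div_mul_eq_mul_div, div_mul_eq_mul_div, ← add_div, eq_div_iff hD]
      ring

def Pt (A : Set (Fin 2 → ℚ)) : Prop := ∀ v, v ∈ A → -v ∈ A → v = 0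

lemma pt_mono {A B : Set (Fin 2 → ℚ)} (h : A ⊆ B) (hB : Pt B) : Pt A :=
  fun v hv hv' => hB v (h hv) (h hv')

lemma par_lemma {a b : Fin 2 → ℚ} (ha : a ≠ 0) (hd : det2 a b = 0)
    (hpt : Pt ↑(Submodule.span Q0 ({a, b} : Set (Fin 2 → ℚ)))) :
    ∃ l : ℚ, 0 ≤ l ∧ b = l • a := by
  have h01 : a 0 ≠ 0 ∨ a 1 ≠ 0 := by
    by_contra h
    push_neg at h
    exact ha (funext fun i => by fin_cases i <;> simp [h.1, h.2])
  set l : ℚ := if a 0 ≠ 0 then b 0 / a 0 else b 1 / a 1 with hl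
  have hb : b = l • a := by
    simp only [det2] at hd
    funext i
    by_cases h0 : a 0 ≠ 0
    · simp only [hl, if_pos h0]
      fin_cases i
      · simp only [Pi.smul_apply, smul_eq_mul, Fin.zero_eta]; field_simp
      · simp only [Pi.smul_apply, smul_eq_mul, Fin.mk_one]
        field_simp
        nlinarith [hd]
    · push_neg at h0
      have h1 : a 1 ≠ 0 := h01.resolve_left (not_not_intro h0)
      have hln : l = b 1 / a 1 := by rw [hl, if_neg (not_not_intro h0)]
      have hb0 : b 0 = 0 := by
        have h2 : a 1 * b 0 = 0 := by rw [h0] at hd; linarith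
        rcases mul_eq_zero.mp h2 with h | h
        · exact absurd h h1
        · exact h
      fin_cases i
      · simp [hln, Pi.smul_apply, smul_eq_mul, hb0, h0]
      · simp only [hln, Pi.smul_apply, smul_eq_mul, Fin.mk_one]; field_simp
  refine ⟨l, ?_, hb⟩
  by_contra hneg
  push_neg at hneg
  have hlne : l ≠ 0 := ne_of_lt hneg
  have hmem : -a ∈ Submodule.span Q0 ({a, b} : Set (Fin 2 → ℚ)) := by
    rw [mem_span_pair']
    refine ⟨0, -l⁻¹, le_refl 0, neg_nonneg.mpr (inv_nonpos.mpr hneg.le), ?_⟩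
    rw [hb, smul_smul, zero_smul, zero_add]
    have h : -l⁻¹ * l = -1 := by field_simp
    rw [h, neg_one_smul]
  have hamem : a ∈ Submodule.span Q0 ({a, b} : Set (Fin 2 → ℚ)) :=
    Submodule.subset_span (by simp)
  exact ha (hpt a hamem hmem)

lemma pt_span_sub {A B : Set (Fin 2 → ℚ)} (h : A ⊆ B)
    (hpt : Pt ↑(Submodule.span Q0 B)) : Pt ↑(Submodule.span Q0 A) :=
  pt_mono (SetLike.coe_subset_coe.mpr (Submodule.span_mono h)) hpt

lemma three_aux {x u w : Fin 2 → ℚ} (hd : 0 < det2 u w)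
    (hpt : Pt ↑(Submodule.span Q0 ({x, u, w} : Set (Fin 2 → ℚ)))) :
    ∃ p q, Submodule.span Q0 ({x, u, w} : Set (Fin 2 → ℚ)) =
      Submodule.span Q0 ({p, q} : Set (Fin 2 → ℚ)) := by
  rcases le_or_gt 0 (det2 u x) with ha | ha
  · rcases le_or_gt 0 (det2 x w) with hb | hb
    · refine ⟨u, w, ?_⟩
      exact Submodule.span_insert_eq_span ((pair_mem_span hd x).mpr ⟨ha, hb⟩)
    · have hane : det2 u x ≠ 0 := by
        intro h0
        have hu0 : u ≠ 0 := by
          intro h; rw [h] at hd; simp [det2] at hd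
        have hptux : Pt ↑(Submodule.span Q0 ({u, x} : Set (Fin 2 → ℚ))) :=
          pt_span_sub (by intro z hz; simp at hz ⊢; tauto) hpt
        obtain ⟨l, hl0, hxl⟩ := par_lemma hu0 h0 hptux
        rw [hxl, det2_smul_left] at hb
        nlinarith
      have hapos : 0 < det2 u x := lt_of_le_of_ne ha (Ne.symm hane)
      refine ⟨u, x, ?_⟩
      have hw : w ∈ Submodule.span Q0 ({u, x} : Set (Fin 2 → ℚ)) :=
        (pair_mem_span hapos w).mpr ⟨hd.le, by rw [det2_swap]; linarith⟩
      have hset : ({x, u, w} : Set (Fin 2 → ℚ)) = insert w {u, x} := by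
        ext z; simp; tauto
      rw [hset]
      exact Submodule.span_insert_eq_span hw
  · rcases lt_trichotomy (det2 x w) 0 with hb | hb | hb
    · exfalso
      have hmx : -x ∈ Submodule.span Q0 ({u, w} : Set (Fin 2 → ℚ)) :=
        (pair_mem_span hd (-x)).mpr
          ⟨by rw [det2_neg_right]; linarith, by rw [det2_neg_left]; linarith⟩
      have hsub : Submodule.span Q0 ({u, w} : Set (Fin 2 → ℚ)) ≤
          Submodule.span Q0 ({x, u, w} : Set (Fin 2 → ℚ)) :=
        Submodule.span_mono (by intro z hz; simp at hz ⊢; tauto)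
      have hx0 : x = 0 := hpt x (Submodule.subset_span (by simp)) (hsub hmx)
      rw [hx0] at ha; simp [det2] at ha
    · exfalso
      have hx0 : x ≠ 0 := by
        intro h; rw [h] at ha; simp [det2] at ha
      have hptxw : Pt ↑(Submodule.span Q0 ({x, w} : Set (Fin 2 → ℚ))) :=
        pt_span_sub (by intro z hz; simp at hz ⊢; tauto) hpt
      obtain ⟨l, hl0, hwl⟩ := par_lemma hx0 hb hptxw
      rw [hwl, det2_smul_right] at hd
      nlinarith
    · refine ⟨x, w, ?_⟩
      have hu : u ∈ Submodule.span Q0 ({x, w} : Set (Fin 2 → ℚ)) :=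
        (pair_mem_span hb u).mpr ⟨by rw [det2_swap]; linarith, hd.le⟩
      have hset : ({x, u, w} : Set (Fin 2 → ℚ)) = insert u {x, w} := by
        ext z; simp; tauto
      rw [hset]
      exact Submodule.span_insert_eq_span hu

lemma three_to_two {x u w : Fin 2 → ℚ}
    (hpt : Pt ↑(Submodule.span Q0 ({x, u, w} : Set (Fin 2 → ℚ)))) :
    ∃ p q, Submodule.span Q0 ({x, u, w} : Set (Fin 2 → ℚ)) =
      Submodule.span Q0 ({p, q} : Set (Fin 2 → ℚ)) := by
  rcases lt_trichotomy (det2 u w) 0 with hd | hd | hd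
  · have hset : ({x, u, w} : Set (Fin 2 → ℚ)) = {x, w, u} := by ext z; simp; tauto
    rw [hset] at hpt ⊢
    exact three_aux (by rw [det2_swap]; linarith) hpt
  · by_cases hu0 : u = 0
    · refine ⟨x, w, ?_⟩
      have hset : ({x, u, w} : Set (Fin 2 → ℚ)) = insert u {x, w} := by
        ext z; simp; tauto
      rw [hset, hu0]
      exact Submodule.span_insert_eq_span (Submodule.zero_mem _)
    · have hptuw : Pt ↑(Submodule.span Q0 ({u, w} : Set (Fin 2 → ℚ))) :=
        pt_span_sub (by intro z hz; simp at hz ⊢; tauto) hpt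
      obtain ⟨l, hl0, hwl⟩ := par_lemma hu0 hd hptuw
      refine ⟨x, u, ?_⟩
      have hw : w ∈ Submodule.span Q0 ({x, u} : Set (Fin 2 → ℚ)) := by
        rw [mem_span_pair']
        exact ⟨0, l, le_refl 0, hl0, by rw [hwl, zero_smul, zero_add]⟩
      have hset : ({x, u, w} : Set (Fin 2 → ℚ)) = insert w {x, u} := by
        ext z; simp; tauto
      rw [hset]
      exact Submodule.span_insert_eq_span hw
  · exact three_aux hd hpt

lemma prune (A : Finset (Fin 2 → ℚ)) (hpt : Pt ↑(Submodule.span Q0 ((A : Set (Fin 2 → ℚ))))) :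
    ∃ p q, Submodule.span Q0 ((A : Set (Fin 2 → ℚ))) =
      Submodule.span Q0 ({p, q} : Set (Fin 2 → ℚ)) := by
  induction A using Finset.induction_on with
  | empty =>
    refine ⟨0, 0, ?_⟩
    have : ({(0 : Fin 2 → ℚ), 0} : Set (Fin 2 → ℚ)) = {0} := by simp
    rw [this]
    simp [Submodule.span_zero_singleton]
  | @insert a A ha IH =>
    have hAsub : (↑A : Set (Fin 2 → ℚ)) ⊆ ↑(insert a A) := by
      rw [Finset.coe_insert]; exact Set.subset_insert _ _
    obtain ⟨p, q, hpq⟩ := IH (pt_span_sub hAsub hpt)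
    have h1 : Submodule.span Q0 ((↑(insert a A) : Set (Fin 2 → ℚ))) =
        Submodule.span Q0 ({a, p, q} : Set (Fin 2 → ℚ)) := by
      rw [Finset.coe_insert, Submodule.span_insert, hpq, ← Submodule.span_insert]
    have hpt' : Pt ↑(Submodule.span Q0 ({a, p, q} : Set (Fin 2 → ℚ))) := by
      rw [← h1]; exact hpt
    obtain ⟨p', q', h2⟩ := three_to_two hpt'
    exact ⟨p', q', by rw [h1, h2]⟩

section Main2D

variable {n : ℕ} (F : Fin n → ((Fin 2 → ℚ) →ₗ[ℚ] ℚ))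

/-- The feasible set. -/
def feas : Set (Fin 2 → ℚ) := {v | ∀ i, 0 ≤ F i v}

lemma feas_add {v w : Fin 2 → ℚ} (hv : v ∈ feas F) (hw : w ∈ feas F) : v + w ∈ feas F := by
  intro i; rw [map_add]; exact add_nonneg (hv i) (hw i)

lemma feas_smul {v : Fin 2 → ℚ} {a : ℚ} (ha : 0 ≤ a) (hv : v ∈ feas F) : a • v ∈ feas F := by
  intro i; rw [map_smul, smul_eq_mul]; exact mul_nonneg ha (hv i)

lemma feas_zero : (0 : Fin 2 → ℚ) ∈ feas F := by intro i; rw [map_zero]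

/-- kernel vector of a functional on ℚ². -/
def kvec (f : (Fin 2 → ℚ) →ₗ[ℚ] ℚ) : Fin 2 → ℚ := ![f ![0,1], -f ![1,0]]

lemma decomp2 (v : Fin 2 → ℚ) : v = v 0 • ![1,0] + v 1 • ![0,1] := by
  funext i; fin_cases i <;> simp

lemma apply_eq (f : (Fin 2 → ℚ) →ₗ[ℚ] ℚ) (v : Fin 2 → ℚ) :
    f v = v 0 * f ![1,0] + v 1 * f ![0,1] := by
  conv_lhs => rw [decomp2 v]
  rw [map_add, map_smul, map_smul, smul_eq_mul, smul_eq_mul]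

lemma kvec_apply (f : (Fin 2 → ℚ) →ₗ[ℚ] ℚ) : f (kvec f) = 0 := by
  rw [apply_eq]
  simp [kvec]
  ring

lemma kvec_ker {f : (Fin 2 → ℚ) →ₗ[ℚ] ℚ} (hf : f ≠ 0) {v : Fin 2 → ℚ} (hv : f v = 0) :
    ∃ l : ℚ, v = l • kvec f := by
  set α := f ![1,0] with hα
  set β := f ![0,1] with hβ
  have hv' : v 0 * α + v 1 * β = 0 := by rw [← apply_eq]; exact hv
  have hne : α ≠ 0 ∨ β ≠ 0 := by
    by_contra h
    push_neg at h
    apply hf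
    refine LinearMap.ext fun w => ?_
    rw [LinearMap.zero_apply, apply_eq, ← hα, ← hβ, h.1, h.2]
    ring
  by_cases hb : β ≠ 0
  · refine ⟨v 0 / β, ?_⟩
    funext i
    fin_cases i
    · simp [kvec, ← hβ]; field_simp
    · simp [kvec, ← hα]
      field_simp
      nlinarith [hv']
  · push_neg at hb
    have ha2 : α ≠ 0 := hne.resolve_right (not_not_intro hb)
    have hv0 : v 0 = 0 := by
      rw [hb, mul_zero, add_zero] at hv'
      rcases mul_eq_zero.mp hv' with h | h
      · exact h
      · exact absurd h ha2
    refine ⟨-(v 1) / α, ?_⟩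
    funext i
    fin_cases i
    · simp [kvec, ← hβ, hb, hv0]
    · simp [kvec, ← hα]; field_simp
end Main2D

section Main2D2

variable {n : ℕ} (F : Fin n → ((Fin 2 → ℚ) →ₗ[ℚ] ℚ))

def Kset : Set (Fin 2 → ℚ) :=
  {v | v ∈ feas F ∧ ∃ i, F i ≠ 0 ∧ (v = kvec (F i) ∨ v = -kvec (F i))}

lemma Kset_finite : (Kset F).Finite := by
  apply Set.Finite.subset
    (Set.finite_iUnion (fun i : Fin n =>
      ((Set.finite_singleton (-kvec (F i))).insert (kvec (F i)))))
  rintro v ⟨_, i, _, h⟩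
  exact Set.mem_iUnion.mpr ⟨i, by rcases h with h | h <;> simp [h]⟩

lemma Kset_sub_feas : Kset F ⊆ feas F := fun _ hv => hv.1

lemma tight_mem {c : Fin 2 → ℚ} (hc : c ∈ feas F) (i : Fin n) (hne : F i ≠ 0)
    (h0 : F i c = 0) : c ∈ Submodule.span Q0 (Kset F) := by
  obtain ⟨l, rfl⟩ := kvec_ker hne h0
  rcases lt_trichotomy l 0 with hl | hl | hl
  · have hinv : (0:ℚ) ≤ (-l)⁻¹ := le_of_lt (inv_pos.mpr (neg_pos.mpr hl))
    have hk : -kvec (F i) ∈ feas F := by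
      have h : -kvec (F i) = (-l)⁻¹ • (l • kvec (F i)) := by
        rw [smul_smul, show (-l)⁻¹ * l = -1 by rw [inv_neg, neg_mul, inv_mul_cancel₀ (ne_of_lt hl)], neg_one_smul]
      rw [h]
      exact feas_smul F hinv hc
    have h2 : l • kvec (F i) = (-l) • (-kvec (F i)) := by
      rw [smul_neg, neg_smul, neg_neg]
    rw [h2]
    exact smul_mem_span (by linarith) (Submodule.subset_span ⟨hk, i, hne, Or.inr rfl⟩)
  · rw [hl, zero_smul]; exact Submodule.zero_mem _
  · have hk : kvec (F i) ∈ feas F := by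
      have h : kvec (F i) = l⁻¹ • (l • kvec (F i)) := by
        rw [smul_smul, inv_mul_cancel₀ (ne_of_gt hl), one_smul]
      rw [h]
      exact feas_smul F (by positivity) hc
    exact smul_mem_span hl.le (Submodule.subset_span ⟨hk, i, hne, Or.inl rfl⟩)

lemma shoot {x y : Fin 2 → ℚ} (hx : x ∈ feas F) (hne : ∃ i, 0 < F i y) :
    ∃ (s : ℚ) (c : Fin 2 → ℚ), 0 ≤ s ∧ c ∈ feas F ∧ c ∈ Submodule.span Q0 (Kset F) ∧ x = c + s • y := by
  classical
  set I : Finset (Fin n) := Finset.univ.filter (fun i => 0 < F i y) with hI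
  have hIne : I.Nonempty := by
    obtain ⟨i, hi⟩ := hne
    exact ⟨i, by simp [hI, hi]⟩
  set s : ℚ := I.inf' hIne (fun i => F i x / F i y) with hs
  obtain ⟨i₀, hi₀I, hi₀⟩ := Finset.exists_mem_eq_inf' hIne (fun i => F i x / F i y)
  have hy₀ : 0 < F i₀ y := by
    have := hi₀I
    rw [hI, Finset.mem_filter] at this
    exact this.2
  have hseq : s = F i₀ x / F i₀ y := by rw [hs, hi₀]
  have hs0 : 0 ≤ s := by rw [hseq]; exact div_nonneg (hx i₀) hy₀.le
  set c : Fin 2 → ℚ := x - s • y with hc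
  have hcf : c ∈ feas F := by
    intro j
    have hFc : F j c = F j x - s * F j y := by rw [hc, map_sub, map_smul, smul_eq_mul]
    rcases le_or_gt (F j y) 0 with hj | hj
    · rw [hFc]; nlinarith [hx j]
    · have hjI : j ∈ I := by rw [hI, Finset.mem_filter]; exact ⟨Finset.mem_univ _, hj⟩
      have hle : s ≤ F j x / F j y := by rw [hs]; exact Finset.inf'_le _ hjI
      have := (le_div_iff₀ hj).mp hle
      rw [hFc]; linarith
  have htight : F i₀ c = 0 := by
    rw [hc, map_sub, map_smul, smul_eq_mul, hseq]
    field_simp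
    ring
  have hneF : F i₀ ≠ 0 := by
    intro h; rw [h] at hy₀; simp at hy₀
  exact ⟨s, c, hs0, hcf, tight_mem F hcf i₀ hneF htight, by rw [hc]; abel⟩

lemma combine (hpt : ∀ v, v ∈ feas F → -v ∈ feas F → v = 0)
    {x y : Fin 2 → ℚ} (hx : x ∈ feas F) (hx0 : x ≠ 0) (hy : y ∈ feas F)
    (hdet : det2 y x ≠ 0) {s : ℚ} {c : Fin 2 → ℚ} (hs : 0 ≤ s)
    (hcs : c ∈ Submodule.span Q0 (Kset F)) (hcf : c ∈ feas F) (hxc : x = c + s • y) :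
    x ∈ Submodule.span Q0 (Kset F) := by
  have hxpos : ∃ i, 0 < F i x := by
    by_contra h
    push_neg at h
    have hmx : -x ∈ feas F := fun i => by rw [map_neg]; linarith [h i, hx i]
    exact hx0 (hpt x hx hmx)
  obtain ⟨s', c', hs', hcf', hcs', hyc⟩ := shoot F hy hxpos
  have hcc : c = x - s • y := by rw [hxc]; abel
  have hcc' : c' = y - s' • x := by rw [hyc]; abel
  set z := c + s • c' with hzdef
  have hz1 : z = (1 - s * s') • x := by
    rw [hzdef, hcc, hcc']
    module
  have hzf : z ∈ feas F := feas_add F hcf (feas_smul F hs hcf')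
  have hzs : z ∈ Submodule.span Q0 (Kset F) :=
    Submodule.add_mem _ hcs (smul_mem_span hs hcs')
  rcases lt_trichotomy (1 - s * s') 0 with h1 | h1 | h1
  · exfalso
    have hmz : -z ∈ feas F := by
      have h : -z = (s * s' - 1) • x := by rw [hz1]; module
      rw [h]
      exact feas_smul F (by linarith) hx
    have hz0 : z = 0 := hpt z hzf hmz
    rw [hz0] at hz1
    have := (smul_eq_zero.mp hz1.symm).resolve_left (by intro h; rw [h] at h1; simp at h1)
    exact hx0 this
  · exfalso
    have hz0 : z = 0 := by rw [hz1, h1, zero_smul]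
    have hmc : -c = s • c' := by
      have h2 := hz0
      rw [hzdef] at h2
      exact (add_eq_zero_iff_neg_eq.mp h2)
    have hc0 : c = 0 := hpt c hcf (by rw [hmc]; exact feas_smul F hs hcf')
    have hxsy : x = s • y := by rw [hxc, hc0, zero_add]
    have hsne : s ≠ 0 := by
      intro h; rw [h] at h1; simp at h1
    have hspos : 0 < s := lt_of_le_of_ne hs (Ne.symm hsne)
    have hyx : y = s⁻¹ • x := by
      rw [hxsy, smul_smul, inv_mul_cancel₀ hsne, one_smul]
    apply hdet
    rw [hyx, det2_smul_left]
    have : det2 x x = 0 := by simp [det2]; ring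
    rw [this, mul_zero]
  · have hxz : x = (1 - s * s')⁻¹ • z := by
      rw [hz1, smul_smul, inv_mul_cancel₀ (ne_of_gt h1), one_smul]
    rw [hxz]
    exact smul_mem_span (by positivity) hzs

def feasSM : Submodule Q0 (Fin 2 → ℚ) where
  carrier := feas F
  add_mem' := fun h1 h2 => feas_add F h1 h2
  zero_mem' := feas_zero F
  smul_mem' := fun c v hv => feas_smul F c.2 hv

lemma main2d (hpt : ∀ v, v ∈ feas F → -v ∈ feas F → v = 0) :
    feas F = ↑(Submodule.span Q0 (Kset F)) := by
  apply Set.Subset.antisymm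
  · intro x hx
    rw [SetLike.mem_coe]
    by_cases hx0 : x = 0
    · rw [hx0]; exact Submodule.zero_mem _
    have hxc : x 0 ≠ 0 ∨ x 1 ≠ 0 := by
      by_contra h
      push_neg at h
      exact hx0 (funext fun i => by fin_cases i <;> simp [h.1, h.2])
    set y : Fin 2 → ℚ := ![-(x 1), x 0] with hy
    have hdyx : det2 y x ≠ 0 := by
      have h : det2 y x = -(x 1 * x 1 + x 0 * x 0) := by simp [det2, hy]; ring
      rw [h]
      intro hcon
      have h2 : x 1 * x 1 + x 0 * x 0 = 0 := by linarith
      rcases hxc with h' | h' <;> nlinarith [mul_self_pos.mpr h', mul_self_nonneg (x 0), mul_self_nonneg (x 1)]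
    by_cases hA : ∃ i, 0 < F i y <;> by_cases hB : ∃ i, 0 < F i (-y)
    · obtain ⟨s₁, c₁, hs₁, hcf₁, hcs₁, hx1⟩ := shoot F hx hA
      obtain ⟨s₂, c₂, hs₂, hcf₂, hcs₂, hx2⟩ := shoot F hx hB
      rcases eq_or_lt_of_le (by linarith : (0:ℚ) ≤ s₁ + s₂) with h | h
      · have hs₁0 : s₁ = 0 := by linarith
        rw [hx1, hs₁0, zero_smul, add_zero]
        exact hcs₁
      · have hc₁ : c₁ = x - s₁ • y := by rw [hx1]; abel
        have hc₂ : c₂ = x + s₂ • y := by rw [hx2]; module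
        have key : (s₁ + s₂) • x = s₂ • c₁ + s₁ • c₂ := by
          rw [hc₁, hc₂]; module
        have hxe : x = (s₁ + s₂)⁻¹ • (s₂ • c₁ + s₁ • c₂) := by
          rw [← key, smul_smul, inv_mul_cancel₀ (ne_of_gt h), one_smul]
        rw [hxe]
        exact smul_mem_span (by positivity)
          (Submodule.add_mem _ (smul_mem_span hs₂ hcs₁) (smul_mem_span hs₁ hcs₂))
    · push_neg at hB
      have hyf : y ∈ feas F := fun i => by
        have := hB i; rw [map_neg] at this; linarith
      obtain ⟨s, c, hs, hcf, hcs, hx1⟩ := shoot F hx hA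
      exact combine F hpt hx hx0 hyf hdyx hs hcs hcf hx1
    · push_neg at hA
      have hyf : -y ∈ feas F := fun i => by
        have := hA i; rw [map_neg]; linarith
      obtain ⟨s, c, hs, hcf, hcs, hx1⟩ := shoot F hx hB
      exact combine F hpt hx hx0 hyf
        (by rw [det2_neg_left]; exact neg_ne_zero.mpr hdyx) hs hcs hcf hx1
    · exfalso
      push_neg at hA hB
      have hyf : y ∈ feas F := fun i => by
        have := hB i; rw [map_neg] at this; linarith
      have hmyf : -y ∈ feas F := fun i => by
        have := hA i; rw [map_neg]; linarith
      have hy0 : y = 0 := hpt y hyf hmyf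
      apply hx0
      funext i
      fin_cases i
      · have := congrFun hy0 1; simpa [hy] using this
      · have := congrFun hy0 0; simpa [hy] using this
  · have hle : Submodule.span Q0 (Kset F) ≤ feasSM F :=
      Submodule.span_le.mpr (Kset_sub_feas F)
    exact fun x hx => hle hx

end Main2D2

/-- Every intersection of a plane (2-dimensional subspace) of `ℚ^d` with an
orthant is a cone generated by at most two vectors. -/
theorem stmt0 {d : ℕ} (P : Submodule ℚ (Fin d → ℚ)) (hP : Module.finrank ℚ P = 2)
    (t : Fin d → ℚ) (ht : ∀ i, t i = 1 ∨ t i = -1) :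
    ∃ V : Set (Fin d → ℚ), V.Finite ∧ V.ncard ≤ 2 ∧
      {x : Fin d → ℚ | x ∈ P ∧ ∀ i, 0 ≤ x i * t i} = cone V := by
  classical
  have ht0 : ∀ i, t i ≠ 0 := fun i => by rcases ht i with h | h <;> rw [h] <;> norm_num
  let b : Module.Basis (Fin 2) ℚ P := Module.finBasisOfFinrankEq ℚ P hP
  let φ : (Fin 2 → ℚ) →ₗ[ℚ] (Fin d → ℚ) :=
    P.subtype.comp (b.equivFun.symm : (Fin 2 → ℚ) ≃ₗ[ℚ] P).toLinearMap
  have hrange : LinearMap.range φ = P := by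
    rw [LinearMap.range_comp, LinearEquiv.range, Submodule.map_top, Submodule.range_subtype]
  have hinj : Function.Injective φ :=
    (Submodule.injective_subtype P).comp b.equivFun.symm.injective
  set F : Fin d → ((Fin 2 → ℚ) →ₗ[ℚ] ℚ) :=
    fun i => t i • ((LinearMap.proj i : (Fin d → ℚ) →ₗ[ℚ] ℚ).comp φ) with hFdef
  have hF : ∀ i v, F i v = t i * (φ v i) := fun i v => rfl
  have hpt : ∀ v, v ∈ feas F → -v ∈ feas F → v = 0 := by
    intro v h1 h2
    have hz : φ v = 0 := by
      funext i
      have ha := h1 i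
      have hb := h2 i
      rw [hF] at ha hb
      rw [map_neg] at hb
      have h3 : t i * φ v i = 0 := le_antisymm (by simpa using hb) ha
      rcases mul_eq_zero.mp h3 with h | h
      · exact absurd h (ht0 i)
      · exact h
    exact hinj (hz.trans (map_zero φ).symm)
  have hmain : feas F = ↑(Submodule.span Q0 (Kset F)) := main2d F hpt
  have hKfin := Kset_finite F
  have hcoe : (hKfin.toFinset : Set (Fin 2 → ℚ)) = Kset F := hKfin.coe_toFinset
  have hptA : Pt ↑(Submodule.span Q0 ((hKfin.toFinset : Finset (Fin 2 → ℚ)) : Set (Fin 2 → ℚ))) := by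
    rw [hcoe, ← hmain]
    exact fun v hv hv' => hpt v hv hv'
  obtain ⟨p, q, hpq⟩ := prune hKfin.toFinset hptA
  rw [hcoe] at hpq
  have hfeas : feas F = ↑(Submodule.span Q0 ({p, q} : Set (Fin 2 → ℚ))) := by
    rw [hmain, hpq]
  refine ⟨φ '' {p, q}, (Set.toFinite _).image φ, ?_, ?_⟩
  · calc (φ '' {p, q}).ncard ≤ ({p, q} : Set (Fin 2 → ℚ)).ncard :=
          Set.ncard_image_le (Set.toFinite _)
      _ ≤ ({q} : Set (Fin 2 → ℚ)).ncard + 1 := Set.ncard_insert_le _ _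
      _ ≤ 2 := by rw [Set.ncard_singleton]
  · rw [cone_eq_span]
    have h1 : φ '' {p, q} = (φ.restrictScalars Q0) '' {p, q} := by
      rw [LinearMap.coe_restrictScalars]
    rw [h1, Submodule.span_image, Submodule.map_coe, LinearMap.coe_restrictScalars, ← hfeas]
    ext x
    simp only [Set.mem_setOf_eq, Set.mem_image]
    constructor
    · rintro ⟨hxP, hxt⟩
      rw [← hrange] at hxP
      obtain ⟨v, rfl⟩ := hxP
      refine ⟨v, fun i => ?_, rfl⟩
      rw [hF]
      rw [mul_comm]
      exact hxt i
    · rintro ⟨v, hv, rfl⟩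
      refine ⟨?_, fun i => ?_⟩
      · rw [← hrange]; exact ⟨v, rfl⟩
      · rw [mul_comm]
        have := hv i
        rw [hF] at this
        exact this
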